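/- For every sequence of positive integers t = t(n) with ⌈n/2⌉ + t(n) ≤ ⌈4n/5⌉, there exists a sequence of sets A_n ⊆ [n] with |A_n| = ⌈n/2⌉ + t(n) such that for every sequence p = p(n) ∈ [0,1] with p(n) = o(min{n^{−2/3}, t(n)^{−1}}), the probability that A_n ∪ [n]_{p(n)} is Schur tends to 0 as n → ∞. -/

import Mathlib

open Filter

/-- A set `S` is *Schur* if every 2-colouring of its elements yields a monochromatic
triple `x, y, z ∈ S` (not necessarily distinct) with `x + y = z`. -/
def IsSchur {α : Type*} [Add α] (S : Set α) : Prop :=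
  ∀ f : α → Bool, ∃ x ∈ S, ∃ y ∈ S, ∃ z ∈ S, f x = f y ∧ f y = f z ∧ x + y = z

/-- The probability that the random subset `[m]_p` of `{1, …, m}`, in which each element is
included independently with probability `p`, lies in the event `E`. -/
noncomputable def randProb (m : ℕ) (p : ℝ) (E : Set (Finset ℕ)) : ℝ :=
  ∑ S ∈ (Finset.Icc 1 m).powerset,
    E.indicator (fun T => p ^ T.card * (1 - p) ^ (m - T.card)) S

lemma binom_sum (F : Finset ℕ) (p : ℝ) :
    ∑ S ∈ F.powerset, p ^ S.card * (1 - p) ^ (F.card - S.card) = 1 := by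
  have h := Finset.prod_add (fun _ : ℕ => p) (fun _ : ℕ => (1 : ℝ) - p) F
  have h1 : ∏ _i ∈ F, (p + (1 - p)) = 1 := by
    rw [Finset.prod_congr rfl (fun _ _ => by ring : ∀ i ∈ F, p + (1 - p) = (1:ℝ))]
    exact Finset.prod_const_one
  rw [h1] at h
  calc ∑ S ∈ F.powerset, p ^ S.card * (1 - p) ^ (F.card - S.card)
      = ∑ S ∈ F.powerset, (∏ _i ∈ S, p) * ∏ _i ∈ F \ S, (1 - p) := by
        refine Finset.sum_congr rfl fun S hS => ?_
        rw [Finset.prod_const, Finset.prod_const,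
          Finset.card_sdiff_of_subset (Finset.mem_powerset.mp hS)]
    _ = 1 := h.symm

lemma prob_superset (m : ℕ) (p : ℝ) (hp0 : 0 ≤ p) (hp1 : p ≤ 1) (D : Finset ℕ) :
    ∑ S ∈ (Finset.Icc 1 m).powerset.filter (fun S => D ⊆ S),
      p ^ S.card * (1 - p) ^ (m - S.card) ≤ p ^ D.card := by
  classical
  by_cases hD : D ⊆ Finset.Icc 1 m
  · have hmcard : (Finset.Icc 1 m).card = m := by
      rw [Nat.card_Icc]; omega
    have key : ∑ S ∈ (Finset.Icc 1 m).powerset.filter (fun S => D ⊆ S),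
        p ^ S.card * (1 - p) ^ (m - S.card)
        = ∑ T ∈ ((Finset.Icc 1 m) \ D).powerset,
            p ^ D.card * (p ^ T.card *
              (1 - p) ^ (((Finset.Icc 1 m) \ D).card - T.card)) := by
      refine Finset.sum_nbij' (fun S => S \ D) (fun T => T ∪ D) ?_ ?_ ?_ ?_ ?_
      · intro S hS
        rw [Finset.mem_filter, Finset.mem_powerset] at hS
        rw [Finset.mem_powerset]
        exact Finset.sdiff_subset_sdiff hS.1 (le_refl D)
      · intro T hT
        rw [Finset.mem_powerset] at hT
        rw [Finset.mem_filter, Finset.mem_powerset]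
        constructor
        · exact Finset.union_subset (hT.trans (Finset.sdiff_subset)) hD
        · exact Finset.subset_union_right
      · intro S hS
        rw [Finset.mem_filter] at hS
        exact Finset.sdiff_union_of_subset hS.2
      · intro T hT
        rw [Finset.mem_powerset] at hT
        apply Finset.union_sdiff_cancel_right
        have : Disjoint T D := by
          refine Finset.disjoint_left.mpr fun a ha hb => ?_
          have := hT ha
          rw [Finset.mem_sdiff] at this
          exact this.2 hb
        exact this
      · intro S hS
        rw [Finset.mem_filter, Finset.mem_powerset] at hS
        obtain ⟨hSm, hDS⟩ := hS
        have hc1 : (S \ D).card = S.card - D.card := Finset.card_sdiff_of_subset hDS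
        have hcD : D.card ≤ S.card := Finset.card_le_card hDS
        have hcS : S.card ≤ m := by
          have := Finset.card_le_card hSm
          rwa [hmcard] at this
        have hc2 : ((Finset.Icc 1 m) \ D).card = m - D.card := by
          rw [Finset.card_sdiff_of_subset hD, hmcard]
        have e2 : m - D.card - (S.card - D.card) = m - S.card := by omega
        rw [hc1, hc2, e2, ← mul_assoc, ← pow_add]
        have e1 : D.card + (S.card - D.card) = S.card := by omega
        rw [e1]
    rw [key, ← Finset.mul_sum, binom_sum, mul_one]
  · have : (Finset.Icc 1 m).powerset.filter (fun S => D ⊆ S) = ∅ := by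
      refine Finset.filter_eq_empty_iff.mpr fun S hS => ?_
      rw [Finset.mem_powerset] at hS
      exact fun hDS => hD (hDS.trans hS)
    rw [this, Finset.sum_empty]
    exact pow_nonneg hp0 _

lemma randProb_nonneg (m : ℕ) (p : ℝ) (hp0 : 0 ≤ p) (hp1 : p ≤ 1)
    (E : Set (Finset ℕ)) : 0 ≤ randProb m p E := by
  refine Finset.sum_nonneg fun S _ => ?_
  exact Set.indicator_nonneg (fun T _ =>
    mul_nonneg (pow_nonneg hp0 _) (pow_nonneg (by linarith) _)) S

lemma union_bound {ι : Type} (m : ℕ) (p : ℝ) (hp0 : 0 ≤ p) (hp1 : p ≤ 1)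
    (E : Set (Finset ℕ)) (C : Finset ι) (Df : ι → Finset ℕ)
    (hcov : ∀ S ∈ (Finset.Icc 1 m).powerset, S ∈ E → ∃ i ∈ C, Df i ⊆ S) :
    randProb m p E ≤ ∑ i ∈ C, p ^ (Df i).card := by
  classical
  have hw : ∀ S : Finset ℕ, 0 ≤ p ^ S.card * (1 - p) ^ (m - S.card) :=
    fun S => mul_nonneg (pow_nonneg hp0 _) (pow_nonneg (by linarith) _)
  calc randProb m p E
      ≤ ∑ S ∈ (Finset.Icc 1 m).powerset, ∑ i ∈ C,
          (if Df i ⊆ S then p ^ S.card * (1 - p) ^ (m - S.card) else 0) := by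
        unfold randProb
        refine Finset.sum_le_sum fun S hS => ?_
        rw [Set.indicator_apply]
        split_ifs with hE
        · obtain ⟨i0, hi0, hsub⟩ := hcov S hS hE
          have hsl := Finset.single_le_sum
            (f := fun i => if Df i ⊆ S then p ^ S.card * (1 - p) ^ (m - S.card) else 0)
            (fun i _ => by split_ifs; exacts [hw S, le_refl 0]) hi0
          simpa [if_pos hsub] using hsl
        · exact Finset.sum_nonneg fun i _ => by split_ifs; exacts [hw S, le_refl 0]
    _ = ∑ i ∈ C, ∑ S ∈ (Finset.Icc 1 m).powerset,
          (if Df i ⊆ S then p ^ S.card * (1 - p) ^ (m - S.card) else 0) :=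
        Finset.sum_comm
    _ ≤ ∑ i ∈ C, p ^ (Df i).card := by
        refine Finset.sum_le_sum fun i _ => ?_
        rw [← Finset.sum_filter]
        exact prob_superset m p hp0 hp1 (Df i)

lemma ceil_half (n : ℕ) : ⌈(n : ℚ) / 2⌉₊ = n - n / 2 := by
  have h1 : (n : ℚ) / 2 ≤ (⌈(n : ℚ) / 2⌉₊ : ℚ) := Nat.le_ceil _
  have h2 : ((⌈(n : ℚ) / 2⌉₊ : ℕ) : ℚ) < (n : ℚ) / 2 + 1 :=
    Nat.ceil_lt_add_one (by positivity)
  set k := ⌈(n : ℚ) / 2⌉₊ with hk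
  have e1 : (n : ℚ) ≤ 2 * k := by linarith
  have e2 : (2 * k : ℚ) < (n : ℚ) + 2 := by linarith
  have e1' : n ≤ 2 * k := by exact_mod_cast e1
  have e2' : 2 * k < n + 2 := by exact_mod_cast e2
  omega

lemma ceil_45 (n : ℕ) : ⌈(4 * (n : ℚ)) / 5⌉₊ ≤ (4 * n + 4) / 5 := by
  rw [Nat.ceil_le, div_le_iff₀ (by norm_num : (0:ℚ) < 5)]
  have h : 4 * n ≤ ((4 * n + 4) / 5) * 5 := by omega
  calc (4 * (n:ℚ)) = ((4 * n : ℕ) : ℚ) := by push_cast; ring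
    _ ≤ ((((4 * n + 4) / 5) * 5 : ℕ) : ℚ) := by exact_mod_cast h
    _ = (((4 * n + 4) / 5 : ℕ) : ℚ) * 5 := by push_cast; ring

lemma det1 (n m : ℕ) (hm1 : 1 ≤ m) (h8 : 8 * m ≤ n) (S : Finset ℕ)
    (hS : S ⊆ Finset.Icc 1 n) (h1 : ∀ x ∈ S, 2 * m < x)
    (h2 : ∀ x ∈ S, ∀ y ∈ S, x + y ∉ S) :
    ¬ IsSchur ((↑(Finset.Icc (n / 2 - m + 1) n) ∪ ↑S : Set ℕ)) := by
  intro h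
  obtain ⟨x, hx, y, hy, z, hz, e1, e2, e3⟩ :=
    h (fun w => decide (w ≤ n / 2 - m ∨ n - 2 * m < w))
  rw [decide_eq_decide] at e1 e2
  have ex : ∀ w, w ∈ (↑(Finset.Icc (n / 2 - m + 1) n) ∪ ↑S : Set ℕ) →
      (1 ≤ w ∧ w ≤ n) ∧ (w ≤ n / 2 - m → w ∈ S) := by
    intro w hw
    rcases hw with hw | hw
    · rw [Finset.mem_coe, Finset.mem_Icc] at hw
      exact ⟨⟨by omega, hw.2⟩, fun hL => by omega⟩
    · rw [Finset.mem_coe] at hw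
      have hb := hS hw
      rw [Finset.mem_Icc] at hb
      exact ⟨⟨hb.1, hb.2⟩, fun _ => hw⟩
  obtain ⟨⟨hx1, hxn⟩, hxS⟩ := ex x hx
  obtain ⟨⟨hy1, hyn⟩, hyS⟩ := ex y hy
  obtain ⟨⟨hz1, hzn⟩, hzS⟩ := ex z hz
  by_cases cx : x ≤ n / 2 - m ∨ n - 2 * m < x
  · have cy : y ≤ n / 2 - m ∨ n - 2 * m < y := e1.mp cx
    have cz : z ≤ n / 2 - m ∨ n - 2 * m < z := e2.mp cy
    rcases cx with cx | cx
    · rcases cy with cy | cy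
      · -- both low: z low too, all in S
        have hzlow : z ≤ n / 2 - m := by omega
        exact h2 x (hxS cx) y (hyS cy) (by rw [e3]; exact hzS hzlow)
      · -- x low, y high: x is a small element of S
        have hxsmall : x ≤ n / 2 - m := cx
        have hxS' : x ∈ S := hxS cx
        have := h1 x hxS'
        omega
    · rcases cy with cy | cy
      · have hyS' : y ∈ S := hyS cy
        have := h1 y hyS'
        omega
      · -- both high: z > n
        omega
  · have cy : ¬ (y ≤ n / 2 - m ∨ n - 2 * m < y) := fun hh => cx (e1.mpr hh)
    have cz : ¬ (z ≤ n / 2 - m ∨ n - 2 * m < z) := fun hh => cy (e2.mpr hh)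
    omega

lemma det2 (n k : ℕ) (hk : k ≤ n) (h5 : n < 5 * (n + 1 - k)) :
    ¬ IsSchur ((↑(Finset.Icc (n + 1 - k) n) : Set ℕ)) := by
  intro h
  obtain ⟨x, hx, y, hy, z, hz, e1, e2, e3⟩ :=
    h (fun w => decide (5 * w ≤ 2 * n ∨ 4 * n < 5 * w))
  rw [decide_eq_decide] at e1 e2
  rw [Finset.mem_coe, Finset.mem_Icc] at hx hy hz
  omega

lemma card3 (x y : ℕ) (hx : 1 ≤ x) (hy : 1 ≤ y) (hxy : x ≠ y) :
    ({x, y, x + y} : Finset ℕ).card = 3 := by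
  rw [Finset.card_insert_of_notMem (by simp; omega),
    Finset.card_insert_of_notMem (by simp; omega), Finset.card_singleton]

lemma card2 (x : ℕ) (hx : 1 ≤ x) : ({x, x, x + x} : Finset ℕ).card = 2 := by
  rw [Finset.insert_idem,
    Finset.card_insert_of_notMem (by simp; omega), Finset.card_singleton]

/-- 0-statement of Theorem 4, dense base sets: for every sequence of
positive integers `t = t(n)` with `⌈n/2⌉ + t(n) ≤ ⌈4n/5⌉`, there is a sequence of sets
`A n ⊆ [n]` with `|A n| = ⌈n/2⌉ + t(n)` such that for every `p = o(min{n^{-2/3}, t(n)⁻¹})`,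
the probability that `A n ∪ [n]_{p(n)}` is Schur tends to `0`. -/
theorem stmt0 (t : ℕ → ℕ)
    (ht : ∀ᶠ n in atTop, 1 ≤ t n ∧ ⌈(n : ℚ) / 2⌉₊ + t n ≤ ⌈(4 * n : ℚ) / 5⌉₊) :
    ∃ A : ℕ → Finset ℕ,
      (∀ᶠ n in atTop, A n ⊆ Finset.Icc 1 n ∧ (A n).card = ⌈(n : ℚ) / 2⌉₊ + t n) ∧
      ∀ p : ℕ → ℝ, (∀ n, p n ∈ Set.Icc (0 : ℝ) 1) →
        Tendsto (fun n => p n / min ((n : ℝ) ^ (-(2 : ℝ) / 3)) ((t n : ℝ)⁻¹))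
          atTop (nhds 0) →
        Tendsto (fun n => randProb n (p n)
            {S : Finset ℕ | IsSchur ((↑(A n) ∪ ↑S : Set ℕ))})
          atTop (nhds 0) := by
  classical
  refine ⟨fun n => if n < 8 * t n
      then Finset.Icc (n + 1 - (⌈(n : ℚ) / 2⌉₊ + t n)) n
      else Finset.Icc (n / 2 - t n + 1) n, ?_, ?_⟩
  · filter_upwards [ht, eventually_ge_atTop 100] with n hn h100
    obtain ⟨ht1, hle⟩ := hn
    have h45 := le_trans hle (ceil_45 n)
    have hch := ceil_half n
    by_cases hb : n < 8 * t n
    · rw [if_pos hb]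
      refine ⟨Finset.Icc_subset_Icc (by omega) le_rfl, ?_⟩
      rw [Nat.card_Icc]
      omega
    · rw [if_neg hb]
      refine ⟨Finset.Icc_subset_Icc (by omega) le_rfl, ?_⟩
      rw [Nat.card_Icc]
      omega
  · intro p hp hto
    have g0 : Tendsto (fun n =>
        8 * (p n / min ((n : ℝ) ^ (-(2 : ℝ) / 3)) ((t n : ℝ)⁻¹))
        + (p n / min ((n : ℝ) ^ (-(2 : ℝ) / 3)) ((t n : ℝ)⁻¹)) ^ 2
        + (p n / min ((n : ℝ) ^ (-(2 : ℝ) / 3)) ((t n : ℝ)⁻¹)) ^ 3)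
        atTop (nhds 0) := by
      have h1 := hto.const_mul (8:ℝ)
      have h2 := hto.pow 2
      have h3 := hto.pow 3
      have h4 := (h1.add h2).add h3
      simpa using h4
    refine squeeze_zero' ?_ ?_ g0
    · exact Filter.Eventually.of_forall fun n =>
        randProb_nonneg _ _ (hp n).1 (hp n).2 _
    · filter_upwards [ht, eventually_ge_atTop 100] with n hn h100
      obtain ⟨ht1, hle⟩ := hn
      have h45 := le_trans hle (ceil_45 n)
      have hch := ceil_half n
      set ε := p n / min ((n : ℝ) ^ (-(2 : ℝ) / 3)) ((t n : ℝ)⁻¹) with hεdef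
      have hp0 := (hp n).1
      have hp1 := (hp n).2
      have hn0 : (0:ℝ) < n := by
        have : (0:ℕ) < n := by omega
        exact_mod_cast this
      have hn1 : (1:ℝ) ≤ n := by
        have : (1:ℕ) ≤ n := by omega
        exact_mod_cast this
      have ha0 : (0:ℝ) ≤ (n:ℝ) := le_of_lt hn0
      have ht0 : (0:ℝ) < t n := by exact_mod_cast ht1
      have hminpos : 0 < min ((n : ℝ) ^ (-(2 : ℝ) / 3)) ((t n : ℝ)⁻¹) :=
        lt_min (Real.rpow_pos_of_pos hn0 _) (inv_pos.mpr ht0)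
      have hε0 : 0 ≤ ε := div_nonneg hp0 hminpos.le
      have hpeq : p n = ε * min ((n : ℝ) ^ (-(2 : ℝ) / 3)) ((t n : ℝ)⁻¹) :=
        (div_mul_cancel₀ _ hminpos.ne').symm
      have hpt : p n * t n ≤ ε := by
        have hle1 : p n ≤ ε * (t n : ℝ)⁻¹ := by
          rw [hpeq]
          exact mul_le_mul_of_nonneg_left (min_le_right _ _) hε0
        calc p n * t n ≤ (ε * (t n : ℝ)⁻¹) * t n :=
              mul_le_mul_of_nonneg_right hle1 ht0.le
          _ = ε := by field_simp
      have hpn : p n ≤ ε * (n : ℝ) ^ (-(2 : ℝ) / 3) := by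
        rw [hpeq]
        exact mul_le_mul_of_nonneg_left (min_le_left _ _) hε0
      have key1 : (n:ℝ) * ((n : ℝ) ^ (-(2 : ℝ) / 3))^2 ≤ 1 := by
        have e : ((n : ℝ) ^ (-(2 : ℝ) / 3))^(2:ℕ) = (n:ℝ) ^ (-(4 : ℝ)/3) := by
          rw [← Real.rpow_natCast ((n:ℝ) ^ (-(2:ℝ)/3)) 2, ← Real.rpow_mul ha0]
          norm_num
        rw [e]
        have h2 : (n:ℝ) ^ (-(4:ℝ)/3) ≤ (n:ℝ) ^ (-1:ℝ) :=
          Real.rpow_le_rpow_of_exponent_le hn1 (by norm_num)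
        calc (n:ℝ) * (n:ℝ)^(-(4:ℝ)/3) ≤ (n:ℝ) * (n:ℝ)^(-1:ℝ) :=
              mul_le_mul_of_nonneg_left h2 ha0
          _ = 1 := by
              rw [Real.rpow_neg_one]
              field_simp
      have key2 : ((n:ℝ) * (n:ℝ)) * ((n : ℝ) ^ (-(2 : ℝ) / 3))^3 = 1 := by
        have e : ((n : ℝ) ^ (-(2 : ℝ) / 3))^(3:ℕ) = (n:ℝ) ^ (-(2 : ℝ)) := by
          rw [← Real.rpow_natCast ((n:ℝ) ^ (-(2:ℝ)/3)) 3, ← Real.rpow_mul ha0]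
          norm_num
        rw [e, Real.rpow_neg ha0,
          show ((2:ℝ)) = ((2:ℕ):ℝ) by norm_num, Real.rpow_natCast, pow_two]
        field_simp
      by_cases hb : n < 8 * t n
      · have hA : (if n < 8 * t n
            then Finset.Icc (n + 1 - (⌈(n : ℚ) / 2⌉₊ + t n)) n
            else Finset.Icc (n / 2 - t n + 1) n)
            = Finset.Icc (n + 1 - (⌈(n : ℚ) / 2⌉₊ + t n)) n := if_pos hb
        rw [hA]
        have hcov : ∀ S ∈ (Finset.Icc 1 n).powerset,
            S ∈ {S : Finset ℕ | IsSchur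
              ((↑(Finset.Icc (n + 1 - (⌈(n : ℚ) / 2⌉₊ + t n)) n) ∪ ↑S : Set ℕ))} →
            ∃ i ∈ Finset.Icc 1 n, (fun i => ({i} : Finset ℕ)) i ⊆ S := by
          intro S hSpow hSE
          rw [Set.mem_setOf_eq] at hSE
          by_contra hno
          push_neg at hno
          have hS0 : S = ∅ := by
            refine Finset.eq_empty_iff_forall_notMem.mpr fun x hx => ?_
            have hxI : x ∈ Finset.Icc 1 n := (Finset.mem_powerset.mp hSpow) hx
            exact hno x hxI (Finset.singleton_subset_iff.mpr hx)
          rw [hS0, Finset.coe_empty, Set.union_empty] at hSE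
          exact det2 n (⌈(n : ℚ) / 2⌉₊ + t n) (by omega) (by omega) hSE
        have hub := union_bound n (p n) hp0 hp1 _ _ _ hcov
        refine le_trans hub ?_
        have hsumeq : ∑ i ∈ Finset.Icc 1 n,
            p n ^ ((fun i => ({i} : Finset ℕ)) i).card = (n : ℝ) * p n := by
          simp [Finset.card_singleton, pow_one, Finset.sum_const,
            Nat.card_Icc, nsmul_eq_mul]
        rw [hsumeq]
        have h8 : (n:ℝ) ≤ 8 * (t n : ℝ) := by
          have : n ≤ 8 * t n := le_of_lt hb
          exact_mod_cast this
        have hstep : (n:ℝ) * p n ≤ 8 * (p n * t n) := by nlinarith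
        nlinarith [pow_nonneg hε0 2, pow_nonneg hε0 3]
      · have hA : (if n < 8 * t n
            then Finset.Icc (n + 1 - (⌈(n : ℚ) / 2⌉₊ + t n)) n
            else Finset.Icc (n / 2 - t n + 1) n)
            = Finset.Icc (n / 2 - t n + 1) n := if_neg hb
        rw [hA]
        have h8 : 8 * t n ≤ n := by omega
        have hcov : ∀ S ∈ (Finset.Icc 1 n).powerset,
            S ∈ {S : Finset ℕ | IsSchur
              ((↑(Finset.Icc (n / 2 - t n + 1) n) ∪ ↑S : Set ℕ))} →
            ∃ i ∈ (Finset.Icc 1 (2 * t n)).disjSum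
                ((Finset.Icc 1 n) ×ˢ (Finset.Icc 1 n)),
              (Sum.elim (fun i => ({i} : Finset ℕ))
                (fun q => ({q.1, q.2, q.1 + q.2} : Finset ℕ)) i) ⊆ S := by
          intro S hSpow hSE
          rw [Set.mem_setOf_eq] at hSE
          by_contra hno
          push_neg at hno
          have hSsub : S ⊆ Finset.Icc 1 n := Finset.mem_powerset.mp hSpow
          have h1 : ∀ x ∈ S, 2 * t n < x := by
            intro x hx
            by_contra hle2
            push_neg at hle2
            have hx1 : 1 ≤ x := (Finset.mem_Icc.mp (hSsub hx)).1
            have hmem : Sum.inl x ∈ (Finset.Icc 1 (2 * t n)).disjSum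
                ((Finset.Icc 1 n) ×ˢ (Finset.Icc 1 n)) :=
              Finset.inl_mem_disjSum.mpr (Finset.mem_Icc.mpr ⟨hx1, hle2⟩)
            exact hno _ hmem (Finset.singleton_subset_iff.mpr hx)
          have h2 : ∀ x ∈ S, ∀ y ∈ S, x + y ∉ S := by
            intro x hx y hy hxy
            have hmem : Sum.inr (x, y) ∈ (Finset.Icc 1 (2 * t n)).disjSum
                ((Finset.Icc 1 n) ×ˢ (Finset.Icc 1 n)) :=
              Finset.inr_mem_disjSum.mpr
                (Finset.mem_product.mpr ⟨hSsub hx, hSsub hy⟩)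
            apply hno _ hmem
            intro w hw
            simp only [Sum.elim_inr, Finset.mem_insert,
              Finset.mem_singleton] at hw
            rcases hw with rfl | rfl | rfl <;> assumption
          exact det1 n (t n) ht1 h8 S hSsub h1 h2 hSE
        have hub := union_bound n (p n) hp0 hp1 _ _ _ hcov
        refine le_trans hub ?_
        rw [Finset.sum_disjSum]
        simp only [Sum.elim_inl, Sum.elim_inr, Finset.card_singleton, pow_one]
        have hT1 : ∑ _x ∈ Finset.Icc 1 (2 * t n), p n
            = ((2 * t n : ℕ) : ℝ) * p n := by
          rw [Finset.sum_const, Nat.card_Icc, nsmul_eq_mul]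
          norm_num
        set P := (Finset.Icc 1 n) ×ˢ (Finset.Icc 1 n) with hP
        set F := fun q : ℕ × ℕ =>
          p n ^ (({q.1, q.2, q.1 + q.2} : Finset ℕ)).card with hF
        have hsplit : ∑ q ∈ P.filter (fun q => q.1 = q.2), F q
            + ∑ q ∈ P.filter (fun q => ¬ q.1 = q.2), F q
            = ∑ q ∈ P, F q :=
          Finset.sum_filter_add_sum_filter_not P _ F
        have hdiag : ∑ q ∈ P.filter (fun q => q.1 = q.2), F q
            ≤ (n:ℝ) * p n ^ 2 := by
          have hterm : ∀ q ∈ P.filter (fun q => q.1 = q.2),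
              F q ≤ p n ^ 2 := by
            intro q hq
            rw [Finset.mem_filter, hP, Finset.mem_product] at hq
            obtain ⟨⟨hq1, _⟩, hqd⟩ := hq
            rw [Finset.mem_Icc] at hq1
            have hc : (({q.1, q.2, q.1 + q.2} : Finset ℕ)).card = 2 := by
              rw [← hqd]
              exact card2 q.1 hq1.1
            rw [hF]
            dsimp only
            rw [hc]
          have hcard : (P.filter (fun q => q.1 = q.2)).card ≤ n := by
            have hinj := Finset.card_le_card_of_injOn (fun q : ℕ × ℕ => q.1)
              (s := P.filter (fun q => q.1 = q.2)) (t := Finset.Icc 1 n)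
              (fun q hq => by
                rw [Finset.mem_coe, Finset.mem_filter, hP, Finset.mem_product] at hq
                exact Finset.mem_coe.mpr hq.1.1)
              (fun q hq q' hq' hfst => by
                simp only [Finset.coe_filter, Set.mem_setOf_eq] at hq hq'
                exact Prod.ext hfst (by
                  dsimp only at hfst
                  rw [← hq.2, ← hq'.2, hfst]))
            calc (P.filter (fun q => q.1 = q.2)).card
                ≤ (Finset.Icc 1 n).card := hinj
              _ = n := by rw [Nat.card_Icc]; omega
          calc ∑ q ∈ P.filter (fun q => q.1 = q.2), F q
              ≤ (P.filter (fun q => q.1 = q.2)).card • (p n ^ 2) :=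
                Finset.sum_le_card_nsmul _ _ _ hterm
            _ = ((P.filter (fun q => q.1 = q.2)).card : ℝ) * p n ^ 2 :=
                nsmul_eq_mul _ _
            _ ≤ (n:ℝ) * p n ^ 2 := by
                have hcc : ((P.filter (fun q => q.1 = q.2)).card : ℝ) ≤ n := by
                  exact_mod_cast hcard
                exact mul_le_mul_of_nonneg_right hcc (pow_nonneg hp0 2)
        have hoff : ∑ q ∈ P.filter (fun q => ¬ q.1 = q.2), F q
            ≤ ((n:ℝ) * (n:ℝ)) * p n ^ 3 := by
          have hterm : ∀ q ∈ P.filter (fun q => ¬ q.1 = q.2),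
              F q ≤ p n ^ 3 := by
            intro q hq
            rw [Finset.mem_filter, hP, Finset.mem_product] at hq
            obtain ⟨⟨hq1, hq2⟩, hqd⟩ := hq
            rw [Finset.mem_Icc] at hq1 hq2
            have hc : (({q.1, q.2, q.1 + q.2} : Finset ℕ)).card = 3 :=
              card3 q.1 q.2 hq1.1 hq2.1 hqd
            rw [hF]
            dsimp only
            rw [hc]
          have hcard : (P.filter (fun q => ¬ q.1 = q.2)).card ≤ n * n := by
            calc (P.filter (fun q => ¬ q.1 = q.2)).card ≤ P.card :=
                  Finset.card_filter_le _ _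
              _ = n * n := by
                  rw [hP, Finset.card_product, Nat.card_Icc, Nat.add_sub_cancel]
          calc ∑ q ∈ P.filter (fun q => ¬ q.1 = q.2), F q
              ≤ (P.filter (fun q => ¬ q.1 = q.2)).card • (p n ^ 3) :=
                Finset.sum_le_card_nsmul _ _ _ hterm
            _ = ((P.filter (fun q => ¬ q.1 = q.2)).card : ℝ) * p n ^ 3 :=
                nsmul_eq_mul _ _
            _ ≤ ((n:ℝ) * (n:ℝ)) * p n ^ 3 := by
                have hcc : ((P.filter (fun q => ¬ q.1 = q.2)).card : ℝ)
                    ≤ (n:ℝ) * (n:ℝ) := by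
                  exact_mod_cast hcard
                exact mul_le_mul_of_nonneg_right hcc (pow_nonneg hp0 3)
        have hsum2 : ∑ q ∈ P, F q ≤ (n:ℝ) * p n ^ 2
            + ((n:ℝ) * (n:ℝ)) * p n ^ 3 := by
          rw [← hsplit]
          exact add_le_add hdiag hoff
        have hb1 : ((2 * t n : ℕ) : ℝ) * p n ≤ 2 * ε := by
          have hcast : ((2 * t n : ℕ) : ℝ) = 2 * (t n : ℝ) := by push_cast; ring
          rw [hcast]
          nlinarith
        have hb2 : (n:ℝ) * p n ^ 2 ≤ ε ^ 2 := by
          have hq2 : p n ^ 2 ≤ ε ^ 2 * ((n : ℝ) ^ (-(2 : ℝ) / 3)) ^ 2 := by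
            have hpp := pow_le_pow_left₀ hp0 hpn 2
            rwa [mul_pow] at hpp
          calc (n:ℝ) * p n ^ 2
              ≤ (n:ℝ) * (ε ^ 2 * ((n : ℝ) ^ (-(2 : ℝ) / 3)) ^ 2) :=
                mul_le_mul_of_nonneg_left hq2 ha0
            _ = ε ^ 2 * ((n:ℝ) * ((n : ℝ) ^ (-(2 : ℝ) / 3)) ^ 2) := by ring
            _ ≤ ε ^ 2 * 1 :=
                mul_le_mul_of_nonneg_left key1 (pow_nonneg hε0 2)
            _ = ε ^ 2 := mul_one _
        have hb3 : ((n:ℝ) * (n:ℝ)) * p n ^ 3 ≤ ε ^ 3 := by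
          have hq3 : p n ^ 3 ≤ ε ^ 3 * ((n : ℝ) ^ (-(2 : ℝ) / 3)) ^ 3 := by
            have hpp := pow_le_pow_left₀ hp0 hpn 3
            rwa [mul_pow] at hpp
          calc ((n:ℝ) * (n:ℝ)) * p n ^ 3
              ≤ ((n:ℝ) * (n:ℝ)) * (ε ^ 3 * ((n : ℝ) ^ (-(2 : ℝ) / 3)) ^ 3) :=
                mul_le_mul_of_nonneg_left hq3 (by positivity)
            _ = ε ^ 3 * (((n:ℝ) * (n:ℝ)) * ((n : ℝ) ^ (-(2 : ℝ) / 3)) ^ 3) := by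
                ring
            _ = ε ^ 3 * 1 := by rw [key2]
            _ = ε ^ 3 := mul_one _
        rw [hT1]
        linarith
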